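/- Let μ > 0 and suppose that for all natural numbers n and k with k ≤ n, every k-uniform recovering pair (𝓐, 𝓑) over a ground set of size n satisfies |𝓐| · |𝓑| ≤ μ^n. Then every recovering pair (𝓐, 𝓑) over a ground set of size n (not necessarily uniform) satisfies |𝓐| · |𝓑| ≤ μ^n. -/

import Mathlib

/-- `(𝓐, 𝓑)` is a recovering pair over the ground set `X`. -/
def IsRecoveringPair (X : Finset ℕ) (𝓐 𝓑 : Finset (Finset ℕ)) : Prop :=
  (∀ A ∈ 𝓐, A ⊆ X) ∧ (∀ B ∈ 𝓑, B ⊆ X) ∧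
  (∀ A ∈ 𝓐, ∀ A' ∈ 𝓐, ∀ B ∈ 𝓑, ∀ B' ∈ 𝓑, A \ B = A' \ B' → A = A') ∧
  (∀ A ∈ 𝓐, ∀ A' ∈ 𝓐, ∀ B ∈ 𝓑, ∀ B' ∈ 𝓑, B \ A = B' \ A' → B = B')

/-- `(𝓐, 𝓑)` is a `k`-uniform pair. -/
def IsUniformPair (k : ℕ) (𝓐 𝓑 : Finset (Finset ℕ)) : Prop :=
  (∀ A ∈ 𝓐, A.card = k) ∧ (∀ B ∈ 𝓑, B.card = k)

namespace Stmt10Aux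

variable {ι : Type} [Fintype ι] [DecidableEq ι]

/-- Disjoint union of sets, placed in "copies" of ℕ indexed by `e i`. -/
def U (e : ι → ℕ) (f : ι → Finset ℕ) : Finset ℕ :=
  Finset.univ.biUnion fun i => (f i).image fun x => Nat.pair (e i) x

omit [DecidableEq ι] in
lemma mem_U {e : ι → ℕ} (he : Function.Injective e) {f : ι → Finset ℕ}
    {i : ι} {x : ℕ} : Nat.pair (e i) x ∈ U e f ↔ x ∈ f i := by
  simp only [U, Finset.mem_biUnion, Finset.mem_image, Finset.mem_univ, true_and]
  constructor
  · rintro ⟨j, y, hy, hxy⟩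
    obtain ⟨h1, h2⟩ := Nat.pair_eq_pair.mp hxy
    obtain rfl := he h1
    exact h2 ▸ hy
  · exact fun h => ⟨i, x, h, rfl⟩

omit [DecidableEq ι] in
lemma U_inj {e : ι → ℕ} (he : Function.Injective e) :
    Function.Injective (U e) := by
  intro f g h
  funext i
  ext x
  rw [← mem_U he (f := f), ← mem_U he (f := g), h]

omit [DecidableEq ι] in
lemma U_sdiff {e : ι → ℕ} (he : Function.Injective e) (f g : ι → Finset ℕ) :
    U e f \ U e g = U e fun i => f i \ g i := by
  ext y
  simp only [Finset.mem_sdiff, U, Finset.mem_biUnion, Finset.mem_image,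
    Finset.mem_univ, true_and]
  constructor
  · rintro ⟨⟨i, x, hx, rfl⟩, hn⟩
    exact ⟨i, x, ⟨hx, fun hxg => hn ⟨i, x, hxg, rfl⟩⟩, rfl⟩
  · rintro ⟨i, x, hx, rfl⟩
    refine ⟨⟨i, x, hx.1, rfl⟩, ?_⟩
    rintro ⟨j, z, hz, hzy⟩
    obtain ⟨h1, h2⟩ := Nat.pair_eq_pair.mp hzy
    obtain rfl := he h1
    exact hx.2 (h2 ▸ hz)

omit [DecidableEq ι] in
lemma card_U {e : ι → ℕ} (he : Function.Injective e) (f : ι → Finset ℕ) :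
    (U e f).card = ∑ i, (f i).card := by
  rw [U, Finset.card_biUnion]
  · refine Finset.sum_congr rfl fun i _ => Finset.card_image_of_injective _ ?_
    intro a b hab
    exact (Nat.pair_eq_pair.mp hab).2
  · intro i _ j _ hij
    simp only [Finset.disjoint_left, Finset.mem_image]
    rintro a ⟨x, hx, rfl⟩ ⟨y, hy, hxy⟩
    exact hij (he (Nat.pair_eq_pair.mp hxy).1.symm)

omit [DecidableEq ι] in
lemma U_subset {e : ι → ℕ} {f g : ι → Finset ℕ} (h : ∀ i, f i ⊆ g i) :
    U e f ⊆ U e g := by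
  intro y hy
  simp only [U, Finset.mem_biUnion, Finset.mem_image, Finset.mem_univ, true_and] at hy ⊢
  obtain ⟨i, x, hx, rfl⟩ := hy
  exact ⟨i, x, h i hx, rfl⟩

lemma recovering_mono {X : Finset ℕ} {𝓐 𝓑 𝓐' 𝓑' : Finset (Finset ℕ)}
    (h : IsRecoveringPair X 𝓐 𝓑) (hA : 𝓐' ⊆ 𝓐) (hB : 𝓑' ⊆ 𝓑) :
    IsRecoveringPair X 𝓐' 𝓑' := by
  obtain ⟨h1, h2, h3, h4⟩ := h
  exact ⟨fun A hAm => h1 A (hA hAm), fun B hBm => h2 B (hB hBm),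
    fun A hAm A' hA'm B hBm B' hB'm => h3 A (hA hAm) A' (hA hA'm) B (hB hBm) B' (hB hB'm),
    fun A hAm A' hA'm B hBm B' hB'm => h4 A (hA hAm) A' (hA hA'm) B (hB hBm) B' (hB hB'm)⟩

set_option maxHeartbeats 1000000 in
lemma key_estimate (μ : ℝ) (hμ : 0 < μ)
    (huni : ∀ (n k : ℕ), k ≤ n → ∀ (X : Finset ℕ) (𝓐 𝓑 : Finset (Finset ℕ)),
      X.card = n → IsRecoveringPair X 𝓐 𝓑 → IsUniformPair k 𝓐 𝓑 →
      (𝓐.card * 𝓑.card : ℝ) ≤ μ ^ n)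
    (n : ℕ) (X : Finset ℕ) (hX : X.card = n)
    (𝓐 𝓑 : Finset (Finset ℕ)) (hrec : IsRecoveringPair X 𝓐 𝓑) (m : ℕ) :
    ((𝓐.card : ℝ) * 𝓑.card) ^ m ≤ (2 * m * n + 1) * μ ^ (m * n) := by
  classical
  set e : Fin m × Bool → ℕ := fun p => 2 * p.1.1 + (cond p.2 1 0) with he_def
  have he : Function.Injective e := by
    rintro ⟨⟨i, hi⟩, b⟩ ⟨⟨j, hj⟩, c⟩ h
    simp only [he_def] at h
    cases b <;> cases c <;> simp_all <;> omega
  set P : Fin m × Bool → Finset (Finset ℕ) := fun p => if p.2 then 𝓑 else 𝓐 with hP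
  set Q : Fin m × Bool → Finset (Finset ℕ) := fun p => if p.2 then 𝓐 else 𝓑 with hQ
  set Y : Finset ℕ := U e (fun _ => X) with hY
  have hYcard : Y.card = 2 * m * n := by
    rw [hY, card_U he]
    simp only [Finset.sum_const, Finset.card_univ, Fintype.card_prod,
      Fintype.card_fin, Fintype.card_bool, smul_eq_mul, hX]
    ring
  set 𝓒 : Finset (Finset ℕ) := (Fintype.piFinset P).image (U e) with h𝓒
  set 𝓓 : Finset (Finset ℕ) := (Fintype.piFinset Q).image (U e) with h𝓓
  have hPA : ∀ (f : Fin m × Bool → Finset ℕ), f ∈ Fintype.piFinset P →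
      ∀ i : Fin m × Bool, (i.2 = false → f i ∈ 𝓐) ∧ (i.2 = true → f i ∈ 𝓑) := by
    intro f hf i
    have := Fintype.mem_piFinset.mp hf i
    constructor <;> intro hb <;> simp only [hP, hb] at this <;> simpa using this
  have hQA : ∀ (f : Fin m × Bool → Finset ℕ), f ∈ Fintype.piFinset Q →
      ∀ i : Fin m × Bool, (i.2 = false → f i ∈ 𝓑) ∧ (i.2 = true → f i ∈ 𝓐) := by
    intro f hf i
    have := Fintype.mem_piFinset.mp hf i
    constructor <;> intro hb <;> simp only [hQ, hb] at this <;> simpa using this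
  obtain ⟨hA_sub, hB_sub, hAB, hBA⟩ := hrec
  have hsubX_P : ∀ f ∈ Fintype.piFinset P, ∀ i : Fin m × Bool, f i ⊆ X := by
    intro f hf i
    rcases Bool.eq_false_or_eq_true i.2 with hb | hb
    · exact hB_sub _ ((hPA f hf i).2 hb)
    · exact hA_sub _ ((hPA f hf i).1 hb)
  have hsubX_Q : ∀ f ∈ Fintype.piFinset Q, ∀ i : Fin m × Bool, f i ⊆ X := by
    intro f hf i
    rcases Bool.eq_false_or_eq_true i.2 with hb | hb
    · exact hA_sub _ ((hQA f hf i).2 hb)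
    · exact hB_sub _ ((hQA f hf i).1 hb)
  -- (𝓒, 𝓓) is a recovering pair over Y
  have hrec𝓒𝓓 : IsRecoveringPair Y 𝓒 𝓓 := by
    refine ⟨?_, ?_, ?_, ?_⟩
    · intro S hS
      obtain ⟨f, hf, rfl⟩ := Finset.mem_image.mp hS
      exact U_subset fun i => hsubX_P f hf i
    · intro S hS
      obtain ⟨f, hf, rfl⟩ := Finset.mem_image.mp hS
      exact U_subset fun i => hsubX_Q f hf i
    · intro S hS S' hS' T hT T' hT' hEq
      obtain ⟨f, hf, rfl⟩ := Finset.mem_image.mp hS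
      obtain ⟨f', hf', rfl⟩ := Finset.mem_image.mp hS'
      obtain ⟨g, hg, rfl⟩ := Finset.mem_image.mp hT
      obtain ⟨g', hg', rfl⟩ := Finset.mem_image.mp hT'
      rw [U_sdiff he, U_sdiff he] at hEq
      have hcomp := congrFun (U_inj he hEq)
      have hff' : f = f' := by
        funext i
        have hi : f i \ g i = f' i \ g' i := hcomp i
        rcases Bool.eq_false_or_eq_true i.2 with hb | hb
        · exact hBA _ ((hQA g hg i).2 hb) _ ((hQA g' hg' i).2 hb)
            _ ((hPA f hf i).2 hb) _ ((hPA f' hf' i).2 hb) hi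
        · exact hAB _ ((hPA f hf i).1 hb) _ ((hPA f' hf' i).1 hb)
            _ ((hQA g hg i).1 hb) _ ((hQA g' hg' i).1 hb) hi
      rw [hff']
    · intro S hS S' hS' T hT T' hT' hEq
      obtain ⟨f, hf, rfl⟩ := Finset.mem_image.mp hS
      obtain ⟨f', hf', rfl⟩ := Finset.mem_image.mp hS'
      obtain ⟨g, hg, rfl⟩ := Finset.mem_image.mp hT
      obtain ⟨g', hg', rfl⟩ := Finset.mem_image.mp hT'
      rw [U_sdiff he, U_sdiff he] at hEq
      have hcomp := congrFun (U_inj he hEq)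
      have hgg' : g = g' := by
        funext i
        have hi : g i \ f i = g' i \ f' i := hcomp i
        rcases Bool.eq_false_or_eq_true i.2 with hb | hb
        · exact hAB _ ((hQA g hg i).2 hb) _ ((hQA g' hg' i).2 hb)
            _ ((hPA f hf i).2 hb) _ ((hPA f' hf' i).2 hb) hi
        · exact hBA _ ((hPA f hf i).1 hb) _ ((hPA f' hf' i).1 hb)
            _ ((hQA g hg i).1 hb) _ ((hQA g' hg' i).1 hb) hi
      rw [hgg']
  -- cardinality of 𝓒
  have hcard𝓒 : (𝓒.card : ℝ) = ((𝓐.card : ℝ) * 𝓑.card) ^ m := by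
    rw [h𝓒, Finset.card_image_of_injective _ (U_inj he), Fintype.card_piFinset]
    push_cast
    rw [Fintype.prod_prod_type]
    simp only [hP]
    rw [Finset.prod_congr rfl fun i _ => (by simp [mul_comm] :
      (∏ b : Bool, ((if b then 𝓑 else 𝓐).card : ℝ)) = (𝓐.card : ℝ) * 𝓑.card)]
    rw [Finset.prod_const, Finset.card_univ, Fintype.card_fin]
  -- class sizes are equal, via the coordinate swap
  set σ : (Fin m × Bool) ≃ (Fin m × Bool) := Equiv.prodCongr (Equiv.refl (Fin m))
    ⟨Bool.not, Bool.not, Bool.not_not, Bool.not_not⟩ with hσ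
  have hclass : ∀ k : ℕ, (𝓒.filter fun S => S.card = k).card
      = (𝓓.filter fun S => S.card = k).card := by
    intro k
    rw [h𝓒, h𝓓, Finset.filter_image, Finset.filter_image,
      Finset.card_image_of_injective _ (U_inj he),
      Finset.card_image_of_injective _ (U_inj he)]
    refine Finset.card_bij' (fun f _ => f ∘ σ) (fun g _ => g ∘ σ.symm) ?_ ?_ ?_ ?_
    · intro f hf
      rw [Finset.mem_filter] at hf ⊢
      constructor
      · rw [Fintype.mem_piFinset]
        intro i
        have := Fintype.mem_piFinset.mp hf.1 (σ i)
        rcases i with ⟨i, b⟩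
        cases b <;> simpa [hσ, hP, hQ] using this
      · show (U e (f ∘ σ)).card = k
        rw [card_U he]
        show (∑ i, (f (σ i)).card) = k
        rw [Equiv.sum_comp σ (fun i => (f i).card), ← card_U he]
        exact hf.2
    · intro g hg
      rw [Finset.mem_filter] at hg ⊢
      constructor
      · rw [Fintype.mem_piFinset]
        intro i
        have := Fintype.mem_piFinset.mp hg.1 (σ.symm i)
        rcases i with ⟨i, b⟩
        cases b <;> simpa [hσ, hP, hQ] using this
      · show (U e (g ∘ σ.symm)).card = k
        rw [card_U he]
        show (∑ i, (g (σ.symm i)).card) = k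
        rw [Equiv.sum_comp σ.symm (fun i => (g i).card), ← card_U he]
        exact hg.2
    · intro f _; funext i; simp
    · intro g _; funext i; simp
  -- pigeonhole
  have hfiber : 𝓒.card = ∑ k ∈ Finset.range (Y.card + 1),
      (𝓒.filter fun S => S.card = k).card := by
    refine Finset.card_eq_sum_card_fiberwise ?_
    intro S hS
    rw [Finset.mem_coe, Finset.mem_range, Nat.lt_succ_iff]
    exact Finset.card_le_card (hrec𝓒𝓓.1 S hS)
  have hpig : ∃ k ∈ Finset.range (Y.card + 1),
      (𝓒.card : ℝ) / (Y.card + 1) ≤ ((𝓒.filter fun S => S.card = k).card : ℝ) := by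
    refine Finset.exists_le_of_sum_le ⟨0, Finset.mem_range.mpr (Nat.succ_pos _)⟩ ?_
    have h1 : ∑ k ∈ Finset.range (Y.card + 1),
        ((𝓒.filter fun S => S.card = k).card : ℝ) = (𝓒.card : ℝ) := by
      exact_mod_cast (congrArg (Nat.cast (R := ℝ)) hfiber).symm
    have h2 : ((Y.card + 1 : ℕ) : ℝ) * ((𝓒.card : ℝ) / ((Y.card : ℝ) + 1))
        = (𝓒.card : ℝ) := by
      push_cast
      field_simp
    rw [Finset.sum_const, Finset.card_range, nsmul_eq_mul, h2]
    exact h1.ge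
  obtain ⟨k, hk_mem, hk_big⟩ := hpig
  have hk_le : k ≤ Y.card := Nat.lt_succ_iff.mp (Finset.mem_range.mp hk_mem)
  set 𝓒k := 𝓒.filter fun S => S.card = k with h𝓒k
  set 𝓓k := 𝓓.filter fun S => S.card = k with h𝓓k
  have hunif : IsUniformPair k 𝓒k 𝓓k :=
    ⟨fun S hS => (Finset.mem_filter.mp hS).2, fun S hS => (Finset.mem_filter.mp hS).2⟩
  have hrec_k : IsRecoveringPair Y 𝓒k 𝓓k :=
    recovering_mono hrec𝓒𝓓 (Finset.filter_subset _ _) (Finset.filter_subset _ _)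
  have happ := huni Y.card k hk_le Y 𝓒k 𝓓k rfl hrec_k hunif
  have h𝓓k_card : 𝓓k.card = 𝓒k.card := (hclass k).symm
  have hsq : ((𝓒k.card : ℝ)) ^ 2 ≤ (μ ^ (m * n)) ^ 2 := by
    have h1 : ((𝓒k.card : ℝ)) ^ 2 = (𝓒k.card : ℝ) * (𝓓k.card : ℝ) := by
      rw [h𝓓k_card]; ring
    rw [h1, ← pow_mul]
    calc (𝓒k.card : ℝ) * (𝓓k.card : ℝ) ≤ μ ^ Y.card := happ
      _ = μ ^ (m * n * 2) := by rw [hYcard]; ring_nf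
  have h𝓒k_le : (𝓒k.card : ℝ) ≤ μ ^ (m * n) := by
    have h1 : (0:ℝ) ≤ (𝓒k.card : ℝ) := Nat.cast_nonneg _
    have h2 : (0:ℝ) ≤ μ ^ (m * n) := le_of_lt (pow_pos hμ _)
    nlinarith [hsq]
  have hbig : ((𝓐.card : ℝ) * 𝓑.card) ^ m / (2 * m * n + 1) ≤ μ ^ (m * n) := by
    calc ((𝓐.card : ℝ) * 𝓑.card) ^ m / (2 * m * n + 1)
        = (𝓒.card : ℝ) / (Y.card + 1) := by rw [hcard𝓒, hYcard]; push_cast; ring_nf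
      _ ≤ (𝓒k.card : ℝ) := hk_big
      _ ≤ μ ^ (m * n) := h𝓒k_le
  have hpos : (0:ℝ) < 2 * m * n + 1 := by positivity
  rw [div_le_iff₀ hpos] at hbig
  linarith [hbig]

end Stmt10Aux

set_option maxHeartbeats 1000000 in
open Stmt10Aux in
theorem stmt_10 (μ : ℝ) (hμ : 0 < μ)
    (huni : ∀ (n k : ℕ), k ≤ n → ∀ (X : Finset ℕ) (𝓐 𝓑 : Finset (Finset ℕ)),
      X.card = n → IsRecoveringPair X 𝓐 𝓑 → IsUniformPair k 𝓐 𝓑 →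
      (𝓐.card * 𝓑.card : ℝ) ≤ μ ^ n)
    (n : ℕ) (X : Finset ℕ) (hX : X.card = n)
    (𝓐 𝓑 : Finset (Finset ℕ)) (hrec : IsRecoveringPair X 𝓐 𝓑) :
    (𝓐.card * 𝓑.card : ℝ) ≤ μ ^ n := by
  classical
  have key := key_estimate μ hμ huni n X hX 𝓐 𝓑 hrec
  by_contra hcon
  push_neg at hcon
  have hμn : (0:ℝ) < μ ^ n := pow_pos hμ _
  set N : ℝ := (𝓐.card : ℝ) * 𝓑.card with hN
  set ε : ℝ := N / μ ^ n - 1 with hε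
  have hεpos : 0 < ε := by
    rw [hε]
    have : 1 < N / μ ^ n := (one_lt_div hμn).mpr hcon
    linarith
  have hr : ∀ m : ℕ, (1 + ε) ^ m ≤ 2 * m * n + 1 := by
    intro m
    have h0 : 1 + ε = N / μ ^ n := by rw [hε]; ring
    have h1 : (1 + ε) ^ m = N ^ m / (μ ^ n) ^ m := by rw [h0, div_pow]
    have h2 : N ^ m ≤ (2 * m * n + 1) * μ ^ (m * n) := key m
    rw [h1, div_le_iff₀ (by positivity), ← pow_mul]
    calc N ^ m ≤ (2 * m * n + 1) * μ ^ (m * n) := h2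
      _ = (2 * ↑m * ↑n + 1) * μ ^ (n * m) := by rw [mul_comm m n]
  -- choose m large: m ≥ (4n+2)/ε²  and m ≥ 1
  obtain ⟨m0, hm0⟩ := exists_nat_ge ((4 * n + 2) / ε ^ 2)
  set m : ℕ := m0 + 1 with hm
  have hm_ge : ((4:ℝ) * n + 2) / ε ^ 2 ≤ m := by
    rw [hm]; push_cast; linarith
  have hmε : (4:ℝ) * n + 2 ≤ m * ε ^ 2 := by
    rw [div_le_iff₀ (by positivity)] at hm_ge
    linarith [hm_ge]
  have hm1 : (1:ℝ) ≤ m := by rw [hm]; push_cast; linarith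
  have hlow : ((m:ℝ) * ε) ^ 2 ≤ (1 + ε) ^ (2 * m) := by
    have h1 : (1:ℝ) + m * ε ≤ (1 + ε) ^ m := one_add_mul_le_pow (by linarith) m
    have hme : (0:ℝ) ≤ m * ε := by positivity
    calc ((m:ℝ) * ε) ^ 2 ≤ (1 + m * ε) ^ 2 := by nlinarith
      _ ≤ ((1 + ε) ^ m) ^ 2 := by nlinarith
      _ = (1 + ε) ^ (2 * m) := by rw [← pow_mul, mul_comm]
  have hup := hr (2 * m)
  have hcast : ((2 * m : ℕ) : ℝ) = 2 * (m : ℝ) := by push_cast; ring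
  rw [hcast] at hup
  have hfinal : (2:ℝ) * (2 * m) * n + 1 < ((m:ℝ) * ε) ^ 2 := by
    have h0 : ((m:ℝ) * ε) ^ 2 = m * (m * ε ^ 2) := by ring
    rw [h0]
    have h3 : (m:ℝ) * (4 * n + 2) ≤ m * (m * ε ^ 2) :=
      mul_le_mul_of_nonneg_left hmε (by positivity)
    have h4 : (2:ℝ) * (2 * m) * n + 1 < m * (4 * n + 2) := by nlinarith
    linarith
  linarith
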